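/- arXiv:1710.07657 — 5 statements merged into one kernel-verified Lean document; each statement's English description precedes it below -/
import Mathlib

section
/- Let t_f > t₀, suppose the controllability Gramian W(t_f) is invertible, let x_f ∈ ℝⁿ, and define the minimum-energy control u*(t) = Bᵀ e^{Aᵀ(t_f−t)} W(t_f)⁻¹ (x_f − g(t_f)). Then the controlled trajectory x(t) = g(t) + ∫_{t₀}^{t} e^{A(t−τ)} B u*(τ) dτ satisfies x(t_f) = x_f; that is, u* steers the system from x₀ at time t₀ exactly to x_f at time t_f. -/
open Matrix MeasureTheory

attribute [local instance] Matrix.normedAddCommGroup Matrix.normedSpace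

private lemma matrix_norm_mul_le {n : ℕ} (M N : Matrix (Fin n) (Fin n) ℝ) :
    ‖M * N‖ ≤ (n : ℝ) * ‖M‖ * ‖N‖ := by
  rw [Matrix.norm_le_iff (by positivity)]
  intro i j
  calc ‖(M * N) i j‖ = ‖∑ k, M i k * N k j‖ := by rw [Matrix.mul_apply]
    _ ≤ ∑ k, ‖M i k * N k j‖ := norm_sum_le _ _
    _ ≤ ∑ _k : Fin n, ‖M‖ * ‖N‖ := by
        refine Finset.sum_le_sum fun k _ => ?_
        rw [norm_mul]
        exact mul_le_mul (Matrix.norm_entry_le_entrywise_sup_norm M)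
          (Matrix.norm_entry_le_entrywise_sup_norm N) (norm_nonneg _) (norm_nonneg _)
    _ = (n : ℝ) * ‖M‖ * ‖N‖ := by simp [mul_assoc]

private lemma matrix_norm_pow_le {n : ℕ} (A : Matrix (Fin n) (Fin n) ℝ) (k : ℕ) :
    ‖A ^ k‖ ≤ ((n : ℝ) * ‖A‖) ^ k := by
  induction k with
  | zero =>
    simp only [pow_zero]
    rw [Matrix.norm_le_iff (by norm_num)]
    intro i j
    simp only [Matrix.one_apply]
    split <;> simp
  | succ k ih =>
    calc ‖A ^ (k + 1)‖ = ‖A ^ k * A‖ := by rw [pow_succ]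
      _ ≤ (n : ℝ) * ‖A ^ k‖ * ‖A‖ := matrix_norm_mul_le _ _
      _ ≤ (n : ℝ) * ((n : ℝ) * ‖A‖) ^ k * ‖A‖ := by
          have hn : (0 : ℝ) ≤ (n : ℝ) := by positivity
          have h0 : (0 : ℝ) ≤ ‖A‖ := norm_nonneg _
          gcongr
      _ = ((n : ℝ) * ‖A‖) ^ (k + 1) := by ring

private lemma continuous_exp_smul {n : ℕ} (A : Matrix (Fin n) (Fin n) ℝ) :
    Continuous fun t : ℝ => NormedSpace.exp (t • A) := by
  have hrw : (fun t : ℝ => NormedSpace.exp (t • A))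
      = fun t : ℝ => ∑' k : ℕ, ((k.factorial : ℝ)⁻¹ * t ^ k) • A ^ k := by
    funext t
    have h : NormedSpace.exp (t • A) = ∑' k : ℕ, ((k.factorial : ℝ)⁻¹ : ℝ) • (t • A) ^ k := by
      rw [NormedSpace.exp_eq_tsum (𝕂 := ℝ)]
    rw [h]
    exact tsum_congr fun k => by rw [smul_pow, smul_smul]
  rw [hrw]
  rw [continuous_iff_continuousAt]
  intro t
  set R : ℝ := |t| + 1 with hR
  clear_value R
  have hcont : ContinuousOn (fun t : ℝ => ∑' k : ℕ, ((k.factorial : ℝ)⁻¹ * t ^ k) • A ^ k)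
      (Metric.ball (0 : ℝ) R) := by
    refine (tendstoUniformlyOn_tsum
      (u := fun k => (R * ((n : ℝ) * ‖A‖)) ^ k / k.factorial)
      (f := fun (k : ℕ) (t : ℝ) => ((k.factorial : ℝ)⁻¹ * t ^ k) • A ^ k)
      (Real.summable_pow_div_factorial _) ?_).continuousOn
      (Filter.Eventually.of_forall fun N => ?_).frequently
    · intro k s hs
      have hsR : |s| ≤ R := by
        have := mem_ball_iff_norm.mp hs
        simp only [sub_zero, Real.norm_eq_abs] at this
        linarith
      have hR0 : (0 : ℝ) ≤ R := by rw [hR]; positivity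
      calc ‖((k.factorial : ℝ)⁻¹ * s ^ k) • A ^ k‖ = |(k.factorial : ℝ)⁻¹ * s ^ k| * ‖A ^ k‖ := by
            rw [norm_smul, Real.norm_eq_abs]
        _ ≤ (k.factorial : ℝ)⁻¹ * R ^ k * ((n : ℝ) * ‖A‖) ^ k := by
            refine mul_le_mul ?_ (matrix_norm_pow_le A k) (norm_nonneg _) (by positivity)
            rw [abs_mul, abs_pow, abs_inv, Nat.abs_cast]
            gcongr
        _ = (R * ((n : ℝ) * ‖A‖)) ^ k / k.factorial := by
            rw [mul_pow]
            ring
    · refine continuousOn_finset_sum _ fun k _ => Continuous.continuousOn ?_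
      exact (Continuous.mul continuous_const (continuous_pow k)).smul continuous_const
  exact hcont.continuousAt (Metric.isOpen_ball.mem_nhds (by simp [hR]))

/-- If `t_f > t₀` and the controllability Gramian `W(t_f)` is invertible,
the minimum-energy control `u*(t) = Bᵀ e^{Aᵀ(t_f−t)} W(t_f)⁻¹ (x_f − g(t_f))` steers the
system from `x₀` at time `t₀` exactly to `x_f` at time `t_f`:
the controlled trajectory `x(t) = g(t) + ∫_{t₀}^{t} e^{A(t−τ)} B u*(τ) dτ` satisfies
`x(t_f) = x_f`. -/
theorem gramian_control_steers_to_target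
    (n m : ℕ) (A : Matrix (Fin n) (Fin n) ℝ) (B : Matrix (Fin n) (Fin m) ℝ)
    (f x₀ : Fin n → ℝ) (t₀ : ℝ)
    (g : ℝ → Fin n → ℝ)
    (hg : ∀ t, g t = (NormedSpace.exp ((t - t₀) • A)).mulVec x₀
        + ∫ τ in t₀..t, (NormedSpace.exp ((t - τ) • A)).mulVec f)
    (W : ℝ → Matrix (Fin n) (Fin n) ℝ)
    (hW : ∀ t, W t = ∫ τ in t₀..t,
        NormedSpace.exp ((t - τ) • A) * B * Bᵀ * NormedSpace.exp ((t - τ) • Aᵀ))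
    (tf : ℝ) (htf : t₀ < tf)
    (hinv : IsUnit (W tf).det)
    (xf : Fin n → ℝ)
    (ustar : ℝ → Fin m → ℝ)
    (hustar : ∀ t, ustar t = Bᵀ.mulVec ((NormedSpace.exp ((tf - t) • Aᵀ)).mulVec
        ((W tf)⁻¹.mulVec (xf - g tf))))
    (x : ℝ → Fin n → ℝ)
    (hx : ∀ t, x t = g t
        + ∫ τ in t₀..t, (NormedSpace.exp ((t - τ) • A)).mulVec (B.mulVec (ustar τ))) :
    x tf = xf := by
  set v : Fin n → ℝ := (W tf)⁻¹.mulVec (xf - g tf) with hv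
  set E : ℝ → Matrix (Fin n) (Fin n) ℝ := fun τ =>
    NormedSpace.exp ((tf - τ) • A) * B * Bᵀ * NormedSpace.exp ((tf - τ) • Aᵀ) with hE
  have h1 : Continuous fun τ : ℝ => NormedSpace.exp ((tf - τ) • A) :=
    (continuous_exp_smul A).comp (continuous_const.sub continuous_id)
  have h2 : Continuous fun τ : ℝ => NormedSpace.exp ((tf - τ) • Aᵀ) :=
    (continuous_exp_smul Aᵀ).comp (continuous_const.sub continuous_id)
  have hcont : Continuous E :=
    ((h1.matrix_mul continuous_const).matrix_mul continuous_const).matrix_mul h2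
  have hInt := hcont.intervalIntegrable (μ := MeasureTheory.volume) t₀ tf
  let L : Matrix (Fin n) (Fin n) ℝ →L[ℝ] (Fin n → ℝ) := LinearMap.toContinuousLinearMap
    { toFun := fun M => M.mulVec v
      map_add' := fun M N => Matrix.add_mulVec M N v
      map_smul' := fun c M => Matrix.smul_mulVec c M v }
  have hLE : ∀ τ : ℝ, (NormedSpace.exp ((tf - τ) • A)).mulVec (B.mulVec (ustar τ))
      = L (E τ) := by
    intro τ
    show _ = (E τ).mulVec v
    rw [hustar τ, hE]
    simp only [Matrix.mulVec_mulVec, ← hv, Matrix.mul_assoc]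
  have hmain : (∫ τ in t₀..tf,
      (NormedSpace.exp ((tf - τ) • A)).mulVec (B.mulVec (ustar τ))) = L (W tf) := by
    rw [hW tf]
    calc (∫ τ in t₀..tf, (NormedSpace.exp ((tf - τ) • A)).mulVec (B.mulVec (ustar τ)))
        = ∫ τ in t₀..tf, L (E τ) := by
          apply intervalIntegral.integral_congr
          intro τ _
          exact hLE τ
      _ = L (∫ τ in t₀..tf, E τ) := L.intervalIntegral_comp_comm hInt
      _ = _ := rfl
  have hLW : L (W tf) = xf - g tf := by
    show (W tf).mulVec v = _
    rw [hv, Matrix.mulVec_mulVec, Matrix.mul_nonsing_inv _ hinv, Matrix.one_mulVec]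
  rw [hx tf, hmain, hLW]
  abel
end

section
/- Let t_f > t₀, suppose the controllability Gramian W(t_f) is invertible, let x_f ∈ ℝⁿ, and let u*(t) = Bᵀ e^{Aᵀ(t_f−t)} W(t_f)⁻¹ (x_f − g(t_f)) be the minimum-energy control. Then the total energy consumed equals the Gramian quadratic form: ∫_{t₀}^{t_f} ‖u*(t)‖² dt = (x_f − g(t_f))ᵀ W(t_f)⁻¹ (x_f − g(t_f)). -/
open Matrix MeasureTheory

section auxCont

attribute [local instance] Matrix.linftyOpNormedRing Matrix.linftyOpNormedAlgebra

lemma auxExpCont (n : ℕ) (A : Matrix (Fin n) (Fin n) ℝ) (c : ℝ) :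
    Continuous fun t : ℝ => NormedSpace.exp ((c - t) • A) :=
  NormedSpace.exp_continuous.comp (((continuous_const.sub continuous_id).smul continuous_const))

end auxCont

attribute [local instance] Matrix.normedAddCommGroup Matrix.normedSpace

lemma auxDot (n m : ℕ) (M : Matrix (Fin n) (Fin m) ℝ) (v : Fin n → ℝ) :
    (Mᵀ.mulVec v) ⬝ᵥ (Mᵀ.mulVec v) = v ⬝ᵥ (M * Mᵀ).mulVec v := by
  conv_rhs => rw [Matrix.dotProduct_mulVec, ← Matrix.vecMul_vecMul,
    Matrix.vecMul_transpose, dotProduct_comm, Matrix.dotProduct_mulVec]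
  rw [Matrix.mulVec_transpose]

/-- If `t_f > t₀` and the controllability Gramian `W(t_f)` is invertible,
the total energy consumed by the minimum-energy control
`u*(t) = Bᵀ e^{Aᵀ(t_f−t)} W(t_f)⁻¹ (x_f − g(t_f))` equals the Gramian quadratic form:
`∫_{t₀}^{t_f} ‖u*(t)‖² dt = (x_f − g(t_f))ᵀ W(t_f)⁻¹ (x_f − g(t_f))`. -/
theorem gramian_control_energy_eq_quadratic_form
    (n m : ℕ) (A : Matrix (Fin n) (Fin n) ℝ) (B : Matrix (Fin n) (Fin m) ℝ)
    (f x₀ : Fin n → ℝ) (t₀ : ℝ)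
    (g : ℝ → Fin n → ℝ)
    (hg : ∀ t, g t = (NormedSpace.exp ((t - t₀) • A)).mulVec x₀
        + ∫ τ in t₀..t, (NormedSpace.exp ((t - τ) • A)).mulVec f)
    (W : ℝ → Matrix (Fin n) (Fin n) ℝ)
    (hW : ∀ t, W t = ∫ τ in t₀..t,
        NormedSpace.exp ((t - τ) • A) * B * Bᵀ * NormedSpace.exp ((t - τ) • Aᵀ))
    (tf : ℝ) (htf : t₀ < tf)
    (hinv : IsUnit (W tf).det)
    (xf : Fin n → ℝ)
    (ustar : ℝ → Fin m → ℝ)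
    (hustar : ∀ t, ustar t = Bᵀ.mulVec ((NormedSpace.exp ((tf - t) • Aᵀ)).mulVec
        ((W tf)⁻¹.mulVec (xf - g tf)))) :
    (∫ t in t₀..tf, ∑ k, (ustar t k) ^ 2)
      = (xf - g tf) ⬝ᵥ (W tf)⁻¹.mulVec (xf - g tf) := by
  set z : Fin n → ℝ := xf - g tf with hz
  set v : Fin n → ℝ := (W tf)⁻¹.mulVec z with hv
  set F : ℝ → Matrix (Fin n) (Fin n) ℝ := fun τ =>
    NormedSpace.exp ((tf - τ) • A) * B * Bᵀ * NormedSpace.exp ((tf - τ) • Aᵀ) with hF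
  -- pointwise identity for the integrand
  have hpt : ∀ t, (∑ k, (ustar t k) ^ 2) = v ⬝ᵥ (F t).mulVec v := by
    intro t
    have hsum : (∑ k, (ustar t k) ^ 2) = ustar t ⬝ᵥ ustar t := by
      simp [dotProduct, sq]
    have hT : NormedSpace.exp ((tf - t) • Aᵀ)
        = (NormedSpace.exp ((tf - t) • A))ᵀ := by
      rw [← Matrix.transpose_smul, Matrix.exp_transpose]
    have hu : ustar t = (NormedSpace.exp ((tf - t) • A) * B)ᵀ.mulVec v := by
      rw [hustar t, hT, Matrix.mulVec_mulVec, Matrix.transpose_mul]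
    rw [hsum, hu, auxDot]
    congr 1
    rw [hF]
    simp only [Matrix.transpose_mul, hT, Matrix.mul_assoc]
  -- the quadratic form as a continuous linear map on matrices
  set L : Matrix (Fin n) (Fin n) ℝ →L[ℝ] ℝ := LinearMap.toContinuousLinearMap
    { toFun := fun M => v ⬝ᵥ M.mulVec v,
      map_add' := fun M N => by simp [Matrix.add_mulVec, dotProduct_add],
      map_smul' := fun c M => by simp [Matrix.smul_mulVec, dotProduct_smul] } with hL
  have hLapp : ∀ M, L M = v ⬝ᵥ M.mulVec v := fun M => rfl
  -- continuity and integrability of F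
  have hFcont : Continuous F := by
    exact ((((auxExpCont n A tf).matrix_mul continuous_const).matrix_mul
      continuous_const).matrix_mul (auxExpCont n Aᵀ tf))
  have hFint : @IntervalIntegrable _ _ NormedAddGroup.toENormedAddMonoid F MeasureTheory.volume t₀ tf :=
    hFcont.intervalIntegrable t₀ tf
  have hcomm : (∫ t in t₀..tf, L (F t)) = L (∫ t in t₀..tf, F t) :=
    ContinuousLinearMap.intervalIntegral_comp_comm L hFint
  have hWint : (∫ t in t₀..tf, F t) = W tf := (hW tf).symm
  calc (∫ t in t₀..tf, ∑ k, (ustar t k) ^ 2)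
      = ∫ t in t₀..tf, L (F t) := by
        refine intervalIntegral.integral_congr fun t _ => ?_
        rw [hpt t, hLapp]
    _ = L (W tf) := by rw [hcomm, hWint]
    _ = v ⬝ᵥ (W tf).mulVec v := hLapp _
    _ = z ⬝ᵥ v := by
        rw [hv, Matrix.mulVec_mulVec, Matrix.mul_nonsing_inv _ hinv, Matrix.one_mulVec,
          dotProduct_comm]
end

section
/- Let t_f > t₀, suppose the controllability Gramian W(t_f) is invertible, and let x_f ∈ ℝⁿ. If a continuous control u : [t₀, t_f] → ℝᵐ steers the system from x₀ at t₀ to x_f at t_f (i.e., g(t_f) + ∫_{t₀}^{t_f} e^{A(t_f−τ)} B u(τ) dτ = x_f) and its energy attains the minimum value, ∫_{t₀}^{t_f} ‖u(t)‖² dt = (x_f − g(t_f))ᵀ W(t_f)⁻¹ (x_f − g(t_f)), then u coincides with the minimum-energy control: u(t) = Bᵀ e^{Aᵀ(t_f−t)} W(t_f)⁻¹ (x_f − g(t_f)) for every t ∈ [t₀, t_f]. -/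
open Matrix MeasureTheory

attribute [local instance] Matrix.normedAddCommGroup Matrix.normedSpace

private lemma dot_integral_comm (n : ℕ) (c : Fin n → ℝ) (F : ℝ → Fin n → ℝ) (a b : ℝ)
    (hF : IntervalIntegrable F MeasureTheory.volume a b) :
    ∫ τ in a..b, c ⬝ᵥ F τ = c ⬝ᵥ ∫ τ in a..b, F τ := by
  let L : (Fin n → ℝ) →L[ℝ] ℝ := LinearMap.toContinuousLinearMap
    { toFun := fun x => c ⬝ᵥ x
      map_add' := fun x y => by simp [dotProduct_add]
      map_smul' := fun r x => by simp [dotProduct_smul] }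
  exact L.intervalIntegral_comp_comm hF

private lemma dotmul_integral_comm (n : ℕ) (c : Fin n → ℝ) (M : ℝ → Matrix (Fin n) (Fin n) ℝ)
    (a b : ℝ) (hM : @IntervalIntegrable _ _ (@NormedAddCommGroup.toENormedAddCommMonoid _ Matrix.normedAddCommGroup).toENormedAddMonoid M MeasureTheory.volume a b) :
    ∫ τ in a..b, c ⬝ᵥ (M τ).mulVec c = c ⬝ᵥ (∫ τ in a..b, M τ).mulVec c := by
  let L : Matrix (Fin n) (Fin n) ℝ →L[ℝ] ℝ := LinearMap.toContinuousLinearMap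
    { toFun := fun X => c ⬝ᵥ X.mulVec c
      map_add' := fun X Y => by simp [Matrix.add_mulVec, dotProduct_add]
      map_smul' := fun r X => by simp [Matrix.smul_mulVec, dotProduct_smul] }
  exact L.intervalIntegral_comp_comm hM

private lemma transpose_mulVec_dot {n m : ℕ} (N : Matrix (Fin n) (Fin m) ℝ) (c : Fin n → ℝ)
    (y : Fin m → ℝ) : (Nᵀ.mulVec c) ⬝ᵥ y = c ⬝ᵥ N.mulVec y := by
  rw [Matrix.mulVec_transpose, Matrix.dotProduct_mulVec]

private lemma dot_continuous {m : ℕ} {f g : ℝ → Fin m → ℝ} (hf : Continuous f)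
    (hg : Continuous g) : Continuous fun τ => f τ ⬝ᵥ g τ := by
  simp only [dotProduct]
  exact continuous_finset_sum _ fun k _ =>
    ((continuous_apply k).comp hf).mul ((continuous_apply k).comp hg)

/-- If `t_f > t₀`, `W(t_f)` is invertible, and a continuous control `u`
steers the system from `x₀` at `t₀` to `x_f` at `t_f` with energy attaining the minimum
value `(x_f − g(t_f))ᵀ W(t_f)⁻¹ (x_f − g(t_f))`, then `u` coincides with the
minimum-energy control: `u(t) = Bᵀ e^{Aᵀ(t_f−t)} W(t_f)⁻¹ (x_f − g(t_f))` for every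
`t ∈ [t₀, t_f]`. -/
theorem minimum_energy_control_unique
    (n m : ℕ) (A : Matrix (Fin n) (Fin n) ℝ) (B : Matrix (Fin n) (Fin m) ℝ)
    (f x₀ : Fin n → ℝ) (t₀ : ℝ)
    (g : ℝ → Fin n → ℝ)
    (hg : ∀ t, g t = (NormedSpace.exp ((t - t₀) • A)).mulVec x₀
        + ∫ τ in t₀..t, (NormedSpace.exp ((t - τ) • A)).mulVec f)
    (W : ℝ → Matrix (Fin n) (Fin n) ℝ)
    (hW : ∀ t, W t = ∫ τ in t₀..t,
        NormedSpace.exp ((t - τ) • A) * B * Bᵀ * NormedSpace.exp ((t - τ) • Aᵀ))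
    (tf : ℝ) (htf : t₀ < tf)
    (hinv : IsUnit (W tf).det)
    (xf : Fin n → ℝ)
    (u : ℝ → Fin m → ℝ) (hu : Continuous u)
    (hreach : g tf
        + (∫ τ in t₀..tf, (NormedSpace.exp ((tf - τ) • A)).mulVec (B.mulVec (u τ)))
        = xf)
    (henergy : (∫ t in t₀..tf, ∑ k, (u t k) ^ 2)
        = (xf - g tf) ⬝ᵥ (W tf)⁻¹.mulVec (xf - g tf)) :
    ∀ t ∈ Set.Icc t₀ tf,
      u t = Bᵀ.mulVec ((NormedSpace.exp ((tf - t) • Aᵀ)).mulVec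
        ((W tf)⁻¹.mulVec (xf - g tf))) := by
  classical
  have hWtf := hW tf
  set d : Fin n → ℝ := xf - g tf with hd
  set c : Fin n → ℝ := (W tf)⁻¹.mulVec d with hcdef
  set v : ℝ → Fin m → ℝ :=
    fun τ => Bᵀ.mulVec ((NormedSpace.exp ((tf - τ) • Aᵀ)).mulVec c) with hvdef
  set F : ℝ → Fin n → ℝ :=
    fun τ => (NormedSpace.exp ((tf - τ) • A)).mulVec (B.mulVec (u τ)) with hFdef
  set M : ℝ → Matrix (Fin n) (Fin n) ℝ := fun τ =>
    NormedSpace.exp ((tf - τ) • A) * B * Bᵀ * NormedSpace.exp ((tf - τ) • Aᵀ) with hMdef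
  -- continuity of the exponential factor
  have hexpc : ∀ (C : Matrix (Fin n) (Fin n) ℝ),
      Continuous fun τ : ℝ => NormedSpace.exp ((tf - τ) • C) := by
    intro C
    letI : NormedRing (Matrix (Fin n) (Fin n) ℝ) := Matrix.linftyOpNormedRing
    letI : NormedAlgebra ℝ (Matrix (Fin n) (Fin n) ℝ) := Matrix.linftyOpNormedAlgebra
    letI : NormedAlgebra ℚ (Matrix (Fin n) (Fin n) ℝ) := NormedAlgebra.restrictScalars ℚ ℝ _
    haveI : @CompleteSpace (Matrix (Fin n) (Fin n) ℝ) (Matrix.linftyOpNormedRing (n := Fin n) (α := ℝ)).toUniformSpace :=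
      @FiniteDimensional.complete ℝ (Matrix (Fin n) (Fin n) ℝ) _ _ _ _ _ _ _ _ _
    exact NormedSpace.exp_continuous.comp
      ((continuous_const.sub continuous_id).smul continuous_const)
  have hvc : Continuous v :=
    continuous_const.matrix_mulVec ((hexpc Aᵀ).matrix_mulVec continuous_const)
  have hFc : Continuous F := (hexpc A).matrix_mulVec (continuous_const.matrix_mulVec hu)
  have hMc : Continuous M :=
    (((hexpc A).matrix_mul continuous_const).matrix_mul continuous_const).matrix_mul (hexpc Aᵀ)
  -- basic identities
  have hFint : (∫ τ in t₀..tf, F τ) = d := by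
    rw [hd, ← hreach]; abel
  have hWd : (W tf).mulVec c = d := by
    rw [hcdef, Matrix.mulVec_mulVec, Matrix.mul_nonsing_inv _ hinv, Matrix.one_mulVec]
  have hET : ∀ τ : ℝ, NormedSpace.exp ((tf - τ) • Aᵀ)
      = (NormedSpace.exp ((tf - τ) • A))ᵀ := by
    intro τ
    rw [← Matrix.transpose_smul, Matrix.exp_transpose]
  have hvN : ∀ τ, v τ = (NormedSpace.exp ((tf - τ) • A) * B)ᵀ.mulVec c := by
    intro τ
    simp only [hvdef, hET τ, Matrix.transpose_mul, ← Matrix.mulVec_mulVec]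
  have hvu : ∀ τ, v τ ⬝ᵥ u τ = c ⬝ᵥ F τ := by
    intro τ
    rw [hvN τ, transpose_mulVec_dot, hFdef]
    simp [Matrix.mulVec_mulVec]
  have hvv : ∀ τ, v τ ⬝ᵥ v τ = c ⬝ᵥ (M τ).mulVec c := by
    intro τ
    rw [hvN τ, transpose_mulVec_dot]
    congr 1
    simp [Matrix.mulVec_mulVec, Matrix.transpose_mul, hMdef, Matrix.mul_assoc, hET]
  have huu : ∀ τ : ℝ, (∑ k, (u τ k) ^ 2) = u τ ⬝ᵥ u τ := by
    intro τ; simp [dotProduct, sq]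
  simp_rw [huu] at henergy
  -- the three integrals
  have h1 : IntervalIntegrable (fun τ => u τ ⬝ᵥ u τ) volume t₀ tf :=
    (dot_continuous hu hu).intervalIntegrable _ _
  have h2 : IntervalIntegrable (fun τ => v τ ⬝ᵥ u τ) volume t₀ tf :=
    (dot_continuous hvc hu).intervalIntegrable _ _
  have h3 : IntervalIntegrable (fun τ => v τ ⬝ᵥ v τ) volume t₀ tf :=
    (dot_continuous hvc hvc).intervalIntegrable _ _
  have Ivu : (∫ τ in t₀..tf, v τ ⬝ᵥ u τ) = c ⬝ᵥ d := by
    calc (∫ τ in t₀..tf, v τ ⬝ᵥ u τ) = ∫ τ in t₀..tf, c ⬝ᵥ F τ := by simp_rw [hvu]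
    _ = c ⬝ᵥ ∫ τ in t₀..tf, F τ :=
        dot_integral_comm n c F _ _ (hFc.intervalIntegrable _ _)
    _ = c ⬝ᵥ d := by rw [hFint]
  have Ivv : (∫ τ in t₀..tf, v τ ⬝ᵥ v τ) = c ⬝ᵥ d := by
    calc (∫ τ in t₀..tf, v τ ⬝ᵥ v τ) = ∫ τ in t₀..tf, c ⬝ᵥ (M τ).mulVec c := by simp_rw [hvv]
    _ = c ⬝ᵥ (∫ τ in t₀..tf, M τ).mulVec c :=
        dotmul_integral_comm n c M _ _ (hMc.intervalIntegrable (μ := volume) _ _)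
    _ = c ⬝ᵥ d := by rw [← hWtf, hWd]
  -- the integral of the squared difference vanishes
  have hexpand : ∀ τ, (u τ - v τ) ⬝ᵥ (u τ - v τ)
      = u τ ⬝ᵥ u τ - 2 * (v τ ⬝ᵥ u τ) + v τ ⬝ᵥ v τ := by
    intro τ
    simp [sub_dotProduct, dotProduct_sub, dotProduct_comm (u τ) (v τ)]
    ring
  have hzero : (∫ τ in t₀..tf, (u τ - v τ) ⬝ᵥ (u τ - v τ)) = 0 := by
    simp_rw [hexpand]
    rw [intervalIntegral.integral_add (h1.sub (h2.const_mul 2)) h3,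
      intervalIntegral.integral_sub h1 (h2.const_mul 2),
      intervalIntegral.integral_const_mul, henergy, Ivu, Ivv, dotProduct_comm d c]
    ring
  -- conclude pointwise equality
  intro t ht
  have hut : u t = v t := by
    by_contra hne
    have hwne : u t - v t ≠ 0 := sub_ne_zero.mpr hne
    have hnn : ∀ τ : ℝ, 0 ≤ (u τ - v τ) ⬝ᵥ (u τ - v τ) := fun τ =>
      Finset.sum_nonneg fun k _ => mul_self_nonneg _
    have hpos : 0 < (u t - v t) ⬝ᵥ (u t - v t) :=
      lt_of_le_of_ne (hnn t) fun h => hwne (dotProduct_self_eq_zero.mp h.symm)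
    have : 0 < ∫ τ in t₀..tf, (u τ - v τ) ⬝ᵥ (u τ - v τ) := by
      apply intervalIntegral.integral_pos htf
      · exact (dot_continuous (hu.sub hvc) (hu.sub hvc)).continuousOn
      · intro x _; exact hnn x
      · exact ⟨t, ht, hpos⟩
    rw [hzero] at this
    exact lt_irrefl 0 this
  simpa only [hvdef] using hut
end

section
/- Let t_f > t₀, suppose W(t_f) is invertible, let x_f ∈ ℝⁿ, and let u*(t) = Bᵀ e^{Aᵀ(t_f−t)} W(t_f)⁻¹ (x_f − g(t_f)) be the minimum-energy control with trajectory x(t) = g(t) + ∫_{t₀}^{t} e^{A(t−τ)} B u*(τ) dτ and cumulative energy E(t) = ∫_{t₀}^{t} ‖u*(s)‖² ds. Then for every intermediate time t ∈ (t₀, t_f] at which W(t) is invertible, the state lies on the time-varying energy hyper-ellipsoid: (x(t) − g(t))ᵀ W(t)⁻¹ (x(t) − g(t)) = E(t). -/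
open Matrix MeasureTheory

attribute [local instance] Matrix.normedAddCommGroup Matrix.normedSpace

section AuxLemmas

variable {n : ℕ}

private lemma exp_cont' (A : Matrix (Fin n) (Fin n) ℝ) (a : ℝ) :
    Continuous fun τ : ℝ => NormedSpace.exp ((a - τ) • A) := by
  letI : SeminormedRing (Matrix (Fin n) (Fin n) ℝ) := Matrix.linftyOpSemiNormedRing
  letI : NormedRing (Matrix (Fin n) (Fin n) ℝ) := Matrix.linftyOpNormedRing
  letI : NormedAlgebra ℝ (Matrix (Fin n) (Fin n) ℝ) := Matrix.linftyOpNormedAlgebra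
  letI : NormedAlgebra ℚ (Matrix (Fin n) (Fin n) ℝ) := NormedAlgebra.restrictScalars ℚ ℝ _
  haveI : @CompleteSpace (Matrix (Fin n) (Fin n) ℝ) PseudoMetricSpace.toUniformSpace :=
    FiniteDimensional.complete ℝ _
  exact NormedSpace.exp_continuous.comp
    ((continuous_const.sub continuous_id).smul continuous_const)

private lemma exp_split' (A : Matrix (Fin n) (Fin n) ℝ) (a b c : ℝ) :
    NormedSpace.exp ((a - c) • A)
      = NormedSpace.exp ((b - c) • A) * NormedSpace.exp ((a - b) • A) := by
  rw [← Matrix.exp_add_of_commute _ _ (((Commute.refl A).smul_left _).smul_right _),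
    ← add_smul]
  congr 1
  ring_nf

private lemma exp_tr' (A : Matrix (Fin n) (Fin n) ℝ) (a : ℝ) :
    NormedSpace.exp (a • Aᵀ) = (NormedSpace.exp (a • A))ᵀ := by
  rw [← Matrix.transpose_smul, Matrix.exp_transpose]

/-- The continuous linear map `M ↦ M *ᵥ v`. -/
private noncomputable def mvCLM (v : Fin n → ℝ) :
    Matrix (Fin n) (Fin n) ℝ →L[ℝ] (Fin n → ℝ) :=
  LinearMap.toContinuousLinearMap
    { toFun := fun M => M.mulVec v
      map_add' := fun M N => Matrix.add_mulVec M N v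
      map_smul' := fun r M => Matrix.smul_mulVec r M v }

@[simp] private lemma mvCLM_apply (v : Fin n → ℝ) (M : Matrix (Fin n) (Fin n) ℝ) :
    mvCLM v M = M.mulVec v := rfl

/-- The continuous linear map `M ↦ v ⬝ᵥ M *ᵥ v`. -/
private noncomputable def qfCLM (v : Fin n → ℝ) :
    Matrix (Fin n) (Fin n) ℝ →L[ℝ] ℝ :=
  LinearMap.toContinuousLinearMap
    { toFun := fun M => v ⬝ᵥ M.mulVec v
      map_add' := fun M N => by simp [Matrix.add_mulVec, dotProduct_add]
      map_smul' := fun r M => by simp [Matrix.smul_mulVec, dotProduct_smul] }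

@[simp] private lemma qfCLM_apply (v : Fin n → ℝ) (M : Matrix (Fin n) (Fin n) ℝ) :
    qfCLM v M = v ⬝ᵥ M.mulVec v := rfl

private lemma quad_eq {m' : ℕ} (M : Matrix (Fin m') (Fin n) ℝ) (c : Fin n → ℝ) :
    c ⬝ᵥ (Mᵀ * M).mulVec c = (M.mulVec c) ⬝ᵥ (M.mulVec c) := by
  rw [← Matrix.mulVec_mulVec, Matrix.dotProduct_mulVec, Matrix.vecMul_transpose]

end AuxLemmas

/-- Under the minimum-energy control
`u*(t) = Bᵀ e^{Aᵀ(t_f−t)} W(t_f)⁻¹ (x_f − g(t_f))` with trajectory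
`x(t) = g(t) + ∫_{t₀}^{t} e^{A(t−τ)} B u*(τ) dτ` and cumulative energy
`E(t) = ∫_{t₀}^{t} ‖u*(s)‖² ds`, for every intermediate time `t ∈ (t₀, t_f]` at which
`W(t)` is invertible, the state lies on the time-varying energy hyper-ellipsoid:
`(x(t) − g(t))ᵀ W(t)⁻¹ (x(t) − g(t)) = E(t)`. -/
theorem state_lies_on_energy_ellipsoid
    (n m : ℕ) (A : Matrix (Fin n) (Fin n) ℝ) (B : Matrix (Fin n) (Fin m) ℝ)
    (f x₀ : Fin n → ℝ) (t₀ : ℝ)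
    (g : ℝ → Fin n → ℝ)
    (hg : ∀ t, g t = (NormedSpace.exp ((t - t₀) • A)).mulVec x₀
        + ∫ τ in t₀..t, (NormedSpace.exp ((t - τ) • A)).mulVec f)
    (W : ℝ → Matrix (Fin n) (Fin n) ℝ)
    (hW : ∀ t, W t = ∫ τ in t₀..t,
        NormedSpace.exp ((t - τ) • A) * B * Bᵀ * NormedSpace.exp ((t - τ) • Aᵀ))
    (tf : ℝ) (htf : t₀ < tf)
    (hinv : IsUnit (W tf).det)
    (xf : Fin n → ℝ)
    (ustar : ℝ → Fin m → ℝ)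
    (hustar : ∀ t, ustar t = Bᵀ.mulVec ((NormedSpace.exp ((tf - t) • Aᵀ)).mulVec
        ((W tf)⁻¹.mulVec (xf - g tf))))
    (x : ℝ → Fin n → ℝ)
    (hx : ∀ t, x t = g t
        + ∫ τ in t₀..t, (NormedSpace.exp ((t - τ) • A)).mulVec (B.mulVec (ustar τ)))
    (E : ℝ → ℝ)
    (hE : ∀ t, E t = ∫ s in t₀..t, ∑ k, (ustar s k) ^ 2) :
    ∀ t ∈ Set.Ioc t₀ tf, IsUnit (W t).det →
      (x t - g t) ⬝ᵥ (W t)⁻¹.mulVec (x t - g t) = E t := by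
  intro t ht hWt
  haveI : CompleteSpace (Matrix (Fin n) (Fin n) ℝ) := FiniteDimensional.complete ℝ _
  set c : Fin n → ℝ := (W tf)⁻¹.mulVec (xf - g tf) with hc
  set v : Fin n → ℝ := (NormedSpace.exp ((tf - t) • Aᵀ)).mulVec c with hv
  set F : ℝ → Matrix (Fin n) (Fin n) ℝ := fun τ =>
    NormedSpace.exp ((t - τ) • A) * B * Bᵀ * NormedSpace.exp ((t - τ) • Aᵀ) with hF
  clear_value F
  clear_value v
  clear_value c
  have hFint : @IntervalIntegrable _ _ NormedAddGroup.toENormedAddMonoid F volume t₀ t := by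
    rw [hF]
    exact ((((exp_cont' A t).matrix_mul continuous_const).matrix_mul
      continuous_const).matrix_mul (exp_cont' Aᵀ t)).intervalIntegrable _ _
  have hWF : W t = ∫ τ in t₀..t, F τ := by
    rw [hW t]; simp only [hF]
  -- Step A : x t - g t = W t *ᵥ v
  have hxg : x t - g t = (W t).mulVec v := by
    have h1 : ∀ τ : ℝ, (NormedSpace.exp ((t - τ) • A)).mulVec (B.mulVec (ustar τ))
        = (F τ).mulVec v := by
      intro τ
      rw [hustar τ, exp_split' Aᵀ tf t τ, hv]
      simp only [hF, Matrix.mulVec_mulVec]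
      congr 1
      simp only [Matrix.mul_assoc]
    rw [hx t, add_sub_cancel_left,
      intervalIntegral.integral_congr (g := fun τ => mvCLM v (F τ))
        (fun τ _ => by simpa using h1 τ),
      hWF, ← mvCLM_apply]
    exact (mvCLM v).intervalIntegral_comp_comm hFint
  -- Step B : E t = v ⬝ᵥ W t *ᵥ v
  have hEt : E t = v ⬝ᵥ (W t).mulVec v := by
    have h2 : ∀ s : ℝ, (∑ k, (ustar s k) ^ 2) = qfCLM v (F s) := by
      intro s
      have hu : ustar s = ((Bᵀ * NormedSpace.exp ((t - s) • Aᵀ))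
          * NormedSpace.exp ((tf - t) • Aᵀ)).mulVec c := by
        rw [hustar s, exp_split' Aᵀ tf t s]
        simp only [Matrix.mulVec_mulVec, Matrix.mul_assoc]
      set M : Matrix (Fin m) (Fin n) ℝ :=
        (Bᵀ * NormedSpace.exp ((t - s) • Aᵀ)) * NormedSpace.exp ((tf - t) • Aᵀ) with hM
      have key : Mᵀ * M
          = (NormedSpace.exp ((tf - t) • Aᵀ))ᵀ
            * (F s * NormedSpace.exp ((tf - t) • Aᵀ)) := by
        simp only [hM, hF, exp_tr', Matrix.transpose_mul, Matrix.transpose_transpose,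
          Matrix.mul_assoc]
      calc (∑ k, (ustar s k) ^ 2)
          = (ustar s) ⬝ᵥ (ustar s) := by simp [dotProduct, sq]
        _ = c ⬝ᵥ (Mᵀ * M).mulVec c := by rw [hu]; exact (quad_eq _ _).symm
        _ = v ⬝ᵥ (F s).mulVec v := by
            rw [key, hv, ← Matrix.mulVec_mulVec, Matrix.dotProduct_mulVec,
              Matrix.vecMul_transpose, ← Matrix.mulVec_mulVec]
        _ = qfCLM v (F s) := (qfCLM_apply _ _).symm
    rw [hE t,
      intervalIntegral.integral_congr (g := fun s => qfCLM v (F s)) (fun s _ => h2 s),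
      hWF, ← qfCLM_apply]
    exact (qfCLM v).intervalIntegral_comp_comm hFint
  -- Conclusion
  rw [hxg, hEt, Matrix.mulVec_mulVec, Matrix.nonsing_inv_mul _ hWt, Matrix.one_mulVec]
  exact dotProduct_comm _ _
end

section
/- Let t_f > t₀, suppose the controllability Gramian W(t_f) is invertible, and let E ≥ 0. A point x_f ∈ ℝⁿ satisfies (x_f − g(t_f))ᵀ W(t_f)⁻¹ (x_f − g(t_f)) ≤ E if and only if there exists a continuous control u : [t₀, t_f] → ℝᵐ with energy ∫_{t₀}^{t_f} ‖u(t)‖² dt ≤ E whose controlled trajectory x(t) = g(t) + ∫_{t₀}^{t} e^{A(t−τ)} B u(τ) dτ satisfies x(t_f) = x_f. That is, the set of states reachable at time t_f with energy at most E is exactly the solid hyper-ellipsoid centered at g(t_f) determined by W(t_f) and E. -/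
open Matrix MeasureTheory

attribute [local instance] Matrix.normedAddCommGroup Matrix.normedSpace

private lemma linmap_intervalIntegral {E F : Type*} [NormedAddCommGroup E] [NormedSpace ℝ E]
    [NormedAddCommGroup F] [NormedSpace ℝ F] [FiniteDimensional ℝ E] [FiniteDimensional ℝ F]
    (L : E →ₗ[ℝ] F) (φ : ℝ → E) (a b : ℝ) (hφ : IntervalIntegrable φ volume a b) :
    (∫ τ in a..b, L (φ τ)) = L (∫ τ in a..b, φ τ) :=
  (LinearMap.toContinuousLinearMap L).intervalIntegral_comp_comm hφ

private lemma cont_exp_aux {N : ℕ} (A : Matrix (Fin N) (Fin N) ℝ) (tf : ℝ) :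
    Continuous fun τ : ℝ => NormedSpace.exp ((tf - τ) • A) := by
  letI : NormedRing (Matrix (Fin N) (Fin N) ℝ) := Matrix.linftyOpNormedRing
  letI : NormedAlgebra ℝ (Matrix (Fin N) (Fin N) ℝ) := Matrix.linftyOpNormedAlgebra
  letI : NormedAlgebra ℚ (Matrix (Fin N) (Fin N) ℝ) := Matrix.linftyOpNormedAlgebra
  haveI : @CompleteSpace (Matrix (Fin N) (Fin N) ℝ) PseudoMetricSpace.toUniformSpace :=
    FiniteDimensional.complete ℝ _
  exact NormedSpace.exp_continuous.comp
    ((continuous_const.sub continuous_id).smul continuous_const)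

theorem reachable_set_eq_energy_ellipsoid
    (n m : ℕ) (A : Matrix (Fin n) (Fin n) ℝ) (B : Matrix (Fin n) (Fin m) ℝ)
    (f x₀ : Fin n → ℝ) (t₀ : ℝ)
    (g : ℝ → Fin n → ℝ)
    (hg : ∀ t, g t = (NormedSpace.exp ((t - t₀) • A)).mulVec x₀
        + ∫ τ in t₀..t, (NormedSpace.exp ((t - τ) • A)).mulVec f)
    (W : ℝ → Matrix (Fin n) (Fin n) ℝ)
    (hW : ∀ t, W t = ∫ τ in t₀..t,
        NormedSpace.exp ((t - τ) • A) * B * Bᵀ * NormedSpace.exp ((t - τ) • Aᵀ))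
    (tf : ℝ) (htf : t₀ < tf)
    (hinv : IsUnit (W tf).det)
    (E : ℝ) (hE : 0 ≤ E)
    (xf : Fin n → ℝ) :
    ((xf - g tf) ⬝ᵥ (W tf)⁻¹.mulVec (xf - g tf) ≤ E) ↔
      ∃ u : ℝ → Fin m → ℝ, Continuous u ∧
        (∫ t in t₀..tf, ∑ k, (u t k) ^ 2) ≤ E ∧
        g tf + (∫ τ in t₀..tf,
          (NormedSpace.exp ((tf - τ) • A)).mulVec (B.mulVec (u τ))) = xf := by
  -- notation
  set z : Fin n → ℝ := xf - g tf with hz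
  set w : Fin n → ℝ := (W tf)⁻¹.mulVec z with hwdef
  have hMc : Continuous fun τ : ℝ => NormedSpace.exp ((tf - τ) • A) := cont_exp_aux A tf
  -- the Gramian, rewritten with transposes
  have hGram : W tf = ∫ τ in t₀..tf,
      NormedSpace.exp ((tf - τ) • A) * B * Bᵀ * (NormedSpace.exp ((tf - τ) • A))ᵀ := by
    rw [hW tf]
    congr 1
    funext τ
    rw [show (tf - τ) • Aᵀ = ((tf - τ) • A)ᵀ from (Matrix.transpose_smul _ _).symm,
      Matrix.exp_transpose]
  -- the Gramian integrand is continuous, hence interval integrable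
  have hGc : Continuous fun τ : ℝ =>
      NormedSpace.exp ((tf - τ) • A) * B * Bᵀ * (NormedSpace.exp ((tf - τ) • A))ᵀ :=
    ((hMc.matrix_mul continuous_const).matrix_mul continuous_const).matrix_mul
      hMc.matrix_transpose
  have hGint : @IntervalIntegrable _ PseudoMetricSpace.toUniformSpace.toTopologicalSpace
      NormedAddGroup.toENormedAddMonoid (fun τ : ℝ =>
      (NormedSpace.exp ((tf - τ) • A) * B * Bᵀ * (NormedSpace.exp ((tf - τ) • A))ᵀ :
        Matrix (Fin n) (Fin n) ℝ))
      volume t₀ tf := hGc.intervalIntegrable _ _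
  -- W tf * (W tf)⁻¹ applied to z gives z
  have hWw : (W tf).mulVec w = z := by
    rw [hwdef, Matrix.mulVec_mulVec, Matrix.mul_nonsing_inv _ hinv, Matrix.one_mulVec]
  -- the candidate optimal control
  set v : ℝ → Fin m → ℝ :=
    fun τ => (Bᵀ * (NormedSpace.exp ((tf - τ) • A))ᵀ).mulVec w with hvdef
  have hvc : Continuous v :=
    (continuous_const.matrix_mul hMc.matrix_transpose).matrix_mulVec continuous_const
  -- key pointwise identity: v τ ⬝ᵥ u τ = w ⬝ᵥ (exp *ᵥ (B *ᵥ u τ))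
  have hpt : ∀ (u : ℝ → Fin m → ℝ) (τ : ℝ),
      v τ ⬝ᵥ u τ = w ⬝ᵥ (NormedSpace.exp ((tf - τ) • A)).mulVec (B.mulVec (u τ)) := by
    intro u τ
    rw [Matrix.mulVec_mulVec, dotProduct_comm (v τ), hvdef]
    calc u τ ⬝ᵥ (Bᵀ * (NormedSpace.exp ((tf - τ) • A))ᵀ).mulVec w
        = (u τ ᵥ* (Bᵀ * (NormedSpace.exp ((tf - τ) • A))ᵀ)) ⬝ᵥ w :=
          dotProduct_mulVec _ _ _
      _ = ((NormedSpace.exp ((tf - τ) • A) * B).mulVec (u τ)) ⬝ᵥ w := by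
          rw [← Matrix.transpose_mul, Matrix.vecMul_transpose]
      _ = w ⬝ᵥ (NormedSpace.exp ((tf - τ) • A) * B).mulVec (u τ) :=
          dotProduct_comm _ _
  -- for any continuous u, the integral of v ⬝ᵥ u equals w ⬝ᵥ (reached displacement)
  have hI3 : ∀ u : ℝ → Fin m → ℝ, Continuous u →
      (∫ τ in t₀..tf, v τ ⬝ᵥ u τ)
        = w ⬝ᵥ (∫ τ in t₀..tf, (NormedSpace.exp ((tf - τ) • A)).mulVec (B.mulVec (u τ))) := by
    intro u hu
    have hφc : Continuous fun τ : ℝ =>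
        (NormedSpace.exp ((tf - τ) • A)).mulVec (B.mulVec (u τ)) :=
      hMc.matrix_mulVec (continuous_const.matrix_mulVec hu)
    have hφint : IntervalIntegrable (fun τ : ℝ =>
        (NormedSpace.exp ((tf - τ) • A)).mulVec (B.mulVec (u τ))) volume t₀ tf :=
      hφc.intervalIntegrable _ _
    have hL : (∫ τ in t₀..tf,
        w ⬝ᵥ (NormedSpace.exp ((tf - τ) • A)).mulVec (B.mulVec (u τ)))
        = w ⬝ᵥ (∫ τ in t₀..tf, (NormedSpace.exp ((tf - τ) • A)).mulVec (B.mulVec (u τ))) :=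
      linmap_intervalIntegral
        { toFun := fun x => w ⬝ᵥ x
          map_add' := fun x y => dotProduct_add w x y
          map_smul' := fun s x => by simp [dotProduct_smul] } _ _ _ hφint
    rw [← hL]
    congr 1
    funext τ
    exact hpt u τ
  -- the displacement achieved by v is exactly z
  have hI1 : (∫ τ in t₀..tf, (NormedSpace.exp ((tf - τ) • A)).mulVec (B.mulVec (v τ))) = z := by
    have hptv : ∀ τ : ℝ, (NormedSpace.exp ((tf - τ) • A)).mulVec (B.mulVec (v τ))
        = (NormedSpace.exp ((tf - τ) • A) * B * Bᵀ *
            (NormedSpace.exp ((tf - τ) • A))ᵀ).mulVec w := by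
      intro τ
      rw [hvdef]
      simp only [Matrix.mulVec_mulVec, Matrix.mul_assoc]
    have hL : (∫ τ in t₀..tf,
        (NormedSpace.exp ((tf - τ) • A) * B * Bᵀ *
          (NormedSpace.exp ((tf - τ) • A))ᵀ).mulVec w)
        = (∫ τ in t₀..tf, NormedSpace.exp ((tf - τ) • A) * B * Bᵀ *
            (NormedSpace.exp ((tf - τ) • A))ᵀ).mulVec w :=
      linmap_intervalIntegral
        { toFun := fun N => N.mulVec w
          map_add' := fun M N => Matrix.add_mulVec M N w
          map_smul' := fun s N => Matrix.smul_mulVec s N w } _ _ _ hGint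
    calc (∫ τ in t₀..tf, (NormedSpace.exp ((tf - τ) • A)).mulVec (B.mulVec (v τ)))
        = ∫ τ in t₀..tf, (NormedSpace.exp ((tf - τ) • A) * B * Bᵀ *
            (NormedSpace.exp ((tf - τ) • A))ᵀ).mulVec w := by
          congr 1; funext τ; exact hptv τ
      _ = (∫ τ in t₀..tf, NormedSpace.exp ((tf - τ) • A) * B * Bᵀ *
            (NormedSpace.exp ((tf - τ) • A))ᵀ).mulVec w := hL
      _ = (W tf).mulVec w := by rw [← hGram]
      _ = z := hWw
  -- energy of v equals the quadratic form
  have hI2 : (∫ t in t₀..tf, ∑ k, (v t k) ^ 2) = z ⬝ᵥ (W tf)⁻¹.mulVec z := by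
    have h1 : (∫ t in t₀..tf, ∑ k, (v t k) ^ 2) = ∫ τ in t₀..tf, v τ ⬝ᵥ v τ := by
      congr 1; funext τ; simp [dotProduct, sq]
    rw [h1, hI3 v hvc, hI1, hwdef, dotProduct_comm]
  constructor
  · -- forward: the ellipsoid point is reachable using v
    intro hq
    refine ⟨v, hvc, ?_, ?_⟩
    · rw [hI2]; exact hq
    · rw [hI1, hz]; abel
  · -- backward: any admissible control forces the ellipsoid inequality
    rintro ⟨u, huc, hue, hux⟩
    have hzeq : (∫ τ in t₀..tf, (NormedSpace.exp ((tf - τ) • A)).mulVec (B.mulVec (u τ))) = z := by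
      rw [hz]; exact eq_sub_of_add_eq' hux
    set q : ℝ := z ⬝ᵥ (W tf)⁻¹.mulVec z with hqdef
    have hwz : w ⬝ᵥ z = q := by rw [hwdef, hqdef, dotProduct_comm]
    have h3 : (∫ τ in t₀..tf, v τ ⬝ᵥ u τ) = q := by rw [hI3 u huc, hzeq, hwz]
    have h2 : (∫ t in t₀..tf, ∑ k, (v t k) ^ 2) = q := hI2
    -- continuity and integrability of the scalar integrands
    have hu2c : Continuous fun τ : ℝ => ∑ k, (u τ k) ^ 2 :=
      continuous_finset_sum _ fun k _ => ((continuous_apply k).comp huc).pow 2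
    have hv2c : Continuous fun τ : ℝ => ∑ k, (v τ k) ^ 2 :=
      continuous_finset_sum _ fun k _ => ((continuous_apply k).comp hvc).pow 2
    have hvuc : Continuous fun τ : ℝ => v τ ⬝ᵥ u τ :=
      continuous_finset_sum _ fun k _ =>
        ((continuous_apply k).comp hvc).mul ((continuous_apply k).comp huc)
    have hnonneg : 0 ≤ ∫ τ in t₀..tf, ∑ k, (u τ k - v τ k) ^ 2 :=
      intervalIntegral.integral_nonneg (le_of_lt htf) fun τ _ =>
        Finset.sum_nonneg fun k _ => sq_nonneg _
    have hsplit : (∫ τ in t₀..tf, ∑ k, (u τ k - v τ k) ^ 2)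
        = (∫ τ in t₀..tf, ∑ k, (u τ k) ^ 2) - 2 * (∫ τ in t₀..tf, v τ ⬝ᵥ u τ)
          + (∫ τ in t₀..tf, ∑ k, (v τ k) ^ 2) := by
      have hfun : (fun τ : ℝ => ∑ k, (u τ k - v τ k) ^ 2)
          = fun τ : ℝ => ((∑ k, (u τ k) ^ 2) - 2 * (v τ ⬝ᵥ u τ)) + ∑ k, (v τ k) ^ 2 := by
        funext τ
        rw [dotProduct, Finset.mul_sum, ← Finset.sum_sub_distrib,
          ← Finset.sum_add_distrib]
        congr 1; funext k; ring
      rw [hfun, intervalIntegral.integral_add (f := fun τ => ∑ k, (u τ k) ^ 2 - 2 * (v τ ⬝ᵥ u τ))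
          (g := fun τ => ∑ k, (v τ k) ^ 2)
          ((hu2c.sub (continuous_const.mul hvuc)).intervalIntegrable _ _) (hv2c.intervalIntegrable _ _),
        intervalIntegral.integral_sub (f := fun τ => ∑ k, (u τ k) ^ 2)
          (g := fun τ => 2 * (v τ ⬝ᵥ u τ)) (hu2c.intervalIntegrable _ _)
          ((continuous_const.mul hvuc).intervalIntegrable _ _),
        intervalIntegral.integral_const_mul]
    rw [hsplit, h3, h2] at hnonneg
    have : q ≤ ∫ τ in t₀..tf, ∑ k, (u τ k) ^ 2 := by linarith
    exact this.trans hue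
end
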